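/- Let (p,l) be an irregular pair (p an odd prime dividing the numerator of B_l, l even, 2 \le l \le p-3), and let n be a positive integer with n \equiv l (mod p-1). Then B_n/n \equiv S_n(p)/(n p) (mod p^2), where S_n(m) = \sum_{\nu=0}^{m-1} \nu^n. -/

import Mathlib

open Finset

lemma five_pow_ge (v : ℕ) (hv : 1 ≤ v) : v + 4 ≤ 5 ^ v := by
  induction v with
  | zero => omega
  | succ w ih =>
    rcases Nat.eq_zero_or_pos w with h | h
    · subst h; norm_num
    · have h5 := ih h
      calc w + 1 + 4 ≤ 5 * (w + 4) := by omega
        _ ≤ 5 * 5 ^ w := by omega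
        _ = 5 ^ (w + 1) := by ring

lemma nat_choose_id {k i : ℕ} (hi : i ≤ k) :
    (k + 1 - i) * (k + 1).choose i = (k + 1) * k.choose i := by
  have h := Nat.add_one_mul_choose_eq k (k - i)
  rw [Nat.choose_symm hi] at h
  have h1 : k - i + 1 = k + 1 - i := by omega
  rw [h1] at h
  have h2 : (k + 1).choose (k + 1 - i) = (k + 1).choose i := by
    rw [← Nat.choose_symm (by omega : i ≤ k + 1)]
  rw [h2] at h
  simpa [mul_comm] using h.symm

section padicHelpers
variable {p : ℕ} [hp : Fact p.Prime]

lemma norm_nat_lb {j b : ℕ} (hj : j ≠ 0) (h : padicValNat p j ≤ b) :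
    (p : ℚ) ^ (-(b : ℤ)) ≤ padicNorm p (j : ℚ) := by
  have hj' : (j : ℚ) ≠ 0 := Nat.cast_ne_zero.mpr hj
  rw [padicNorm.eq_zpow_of_nonzero hj', padicValRat.of_nat]
  apply zpow_le_zpow_right₀ (by exact_mod_cast hp.out.one_lt.le)
  omega

lemma norm_pow_p (j : ℕ) : padicNorm p ((p : ℚ) ^ j) = (p : ℚ) ^ (-(j : ℤ)) := by
  have hp' : ((p : ℚ)) ≠ 0 := Nat.cast_ne_zero.mpr hp.out.ne_zero
  rw [padicNorm.eq_zpow_of_nonzero (pow_ne_zero _ hp')]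
  congr 1
  rw [padicValRat.pow, padicValRat.self hp.out.one_lt]
  simp

/-- The workhorse bound for a single term. -/
lemma norm_term_le {B c : ℚ} {j m b1 b2 : ℕ} {t : ℤ}
    (hB : padicNorm p B ≤ (p : ℚ) ^ (b1 : ℤ)) (hc : padicNorm p c ≤ 1) (hm : m ≠ 0)
    (hval : padicValNat p m ≤ b2) (ht : (b1 : ℤ) - j + b2 ≤ t) :
    padicNorm p (B * c * (p : ℚ) ^ j / (m : ℚ)) ≤ (p : ℚ) ^ t := by
  have hp1 : (1 : ℚ) < p := by exact_mod_cast hp.out.one_lt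
  have hp0 : (0 : ℚ) < p := by positivity
  rw [padicNorm.div, padicNorm.mul, padicNorm.mul, norm_pow_p]
  have hmlb := norm_nat_lb (p := p) hm hval
  have hmpos : (0 : ℚ) < (p : ℚ) ^ (-(b2 : ℤ)) := by positivity
  calc padicNorm p B * padicNorm p c * (p : ℚ) ^ (-(j : ℤ)) / padicNorm p (m : ℚ)
      ≤ (p : ℚ) ^ (b1 : ℤ) * 1 * (p : ℚ) ^ (-(j : ℤ)) / (p : ℚ) ^ (-(b2 : ℤ)) := by
        gcongr <;>
          first
            | exact padicNorm.nonneg _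
            | positivity
    _ = (p : ℚ) ^ ((b1 : ℤ) - j + b2) := by
        rw [mul_one, ← zpow_add₀ (ne_of_gt hp0), ← zpow_sub₀ (ne_of_gt hp0)]
        congr 1; ring
    _ ≤ (p : ℚ) ^ t := zpow_le_zpow_right₀ hp1.le ht

lemma num_dvd_of_norm_le {q : ℚ} (h : padicNorm p q ≤ (p : ℚ) ^ (-2 : ℤ)) :
    ((p : ℤ)) ^ 2 ∣ q.num := by
  rcases eq_or_ne q 0 with rfl | hq
  · simp
  have hden : (q.den : ℚ) ≠ 0 := Nat.cast_ne_zero.mpr q.den_nz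
  have hdn : padicNorm p (q.den : ℚ) ≠ 0 := fun h0 => hden (padicNorm.zero_of_padicNorm_eq_zero h0)
  have h2 : padicNorm p q = padicNorm p (q.num : ℚ) / padicNorm p (q.den : ℚ) := by
    conv_lhs => rw [← Rat.num_div_den q]
    rw [padicNorm.div]
  have h1 : padicNorm p (q.num : ℚ) ≤ (p : ℚ) ^ (-2 : ℤ) := by
    have : padicNorm p (q.num : ℚ) = padicNorm p q * padicNorm p (q.den : ℚ) := by
      rw [h2, div_mul_cancel₀ _ hdn]
    rw [this]
    calc padicNorm p q * padicNorm p (q.den : ℚ) ≤ (p : ℚ) ^ (-2 : ℤ) * 1 := by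
          gcongr <;> first
            | exact padicNorm.nonneg _
            | exact padicNorm.of_nat _
      _ = (p : ℚ) ^ (-2 : ℤ) := mul_one _
  have := (padicNorm.dvd_iff_norm_le (p := p) (n := 2) (z := q.num)).mpr (by
    simpa using h1)
  simpa using this
end padicHelpers

section valBounds
variable {p : ℕ} [hp : Fact p.Prime] (hp5 : 5 ≤ p)
include hp5

/-- `v_p(j) + 2 ≤ j` for `j ≥ 2`, `p ≥ 5`. -/
lemma val_add_two_le {j : ℕ} (hj : 2 ≤ j) : padicValNat p j + 2 ≤ j := by
  set v := padicValNat p j with hv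
  rcases Nat.eq_zero_or_pos v with h0 | h1
  · omega
  · have hdvd : p ^ v ∣ j := pow_padicValNat_dvd
    have hle : p ^ v ≤ j := Nat.le_of_dvd (by omega) hdvd
    have h5 : 5 ^ v ≤ p ^ v := Nat.pow_le_pow_left hp5 v
    have := five_pow_ge v h1
    omega

/-- `v_p(j(j+1)) + 3 ≤ j` for `j ≥ 3`, `p ≥ 5`. -/
lemma val_consec_le {j : ℕ} (hj : 3 ≤ j) : padicValNat p (j * (j + 1)) + 3 ≤ j := by
  have hj0 : j ≠ 0 := by omega
  have hmul : padicValNat p (j * (j + 1)) = padicValNat p j + padicValNat p (j + 1) :=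
    padicValNat.mul hj0 (by omega)
  have hnot : padicValNat p j = 0 ∨ padicValNat p (j + 1) = 0 := by
    by_contra hcon
    push_neg at hcon
    have h1 : p ∣ j := dvd_trans (dvd_pow_self p (by omega : padicValNat p j ≠ 0))
      pow_padicValNat_dvd
    have h2 : p ∣ j + 1 := dvd_trans (dvd_pow_self p (by omega : padicValNat p (j+1) ≠ 0))
      pow_padicValNat_dvd
    have h3 : p ∣ 1 := by simpa using Nat.dvd_sub h2 h1
    have := Nat.le_of_dvd one_pos h3
    omega
  rcases hnot with h | h
  · rw [hmul, h]
    set v := padicValNat p (j + 1) with hv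
    rcases Nat.eq_zero_or_pos v with h0 | h1
    · omega
    · have hle : p ^ v ≤ j + 1 := Nat.le_of_dvd (by omega) pow_padicValNat_dvd
      have h5 : 5 ^ v ≤ p ^ v := Nat.pow_le_pow_left hp5 v
      have := five_pow_ge v h1
      omega
  · rw [hmul, h]
    set v := padicValNat p j with hv
    rcases Nat.eq_zero_or_pos v with h0 | h1
    · omega
    · have hle : p ^ v ≤ j := Nat.le_of_dvd (by omega) pow_padicValNat_dvd
      have h5 : 5 ^ v ≤ p ^ v := Nat.pow_le_pow_left hp5 v
      have := five_pow_ge v h1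
      omega

end valBounds

section powerSum
variable {p : ℕ} [hp : Fact p.Prime]

lemma zmod_sum_range_pow (k : ℕ) :
    ((∑ x ∈ Finset.range p, x ^ k : ℕ) : ZMod p) = ∑ x : ZMod p, x ^ k := by
  push_cast
  refine Finset.sum_nbij' (fun i => (i : ZMod p)) (fun x => x.val) ?_ ?_ ?_ ?_ ?_
  · intro a _; exact Finset.mem_univ _
  · intro x _
    exact Finset.mem_range.mpr (ZMod.val_lt x)
  · intro a ha
    exact ZMod.val_cast_of_lt (Finset.mem_range.mp ha)
  · intro x _
    exact ZMod.natCast_rightInverse x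
  · intro a _; rfl

lemma powerSum_dvd {k : ℕ} (hk0 : k ≠ 0) (hk : ¬ (p - 1) ∣ k) :
    p ∣ ∑ x ∈ Finset.range p, x ^ k := by
  classical
  rw [← ZMod.natCast_eq_zero_iff, zmod_sum_range_pow]
  let φ : (ZMod p)ˣ ↪ ZMod p := ⟨fun x ↦ x, Units.val_injective⟩
  have hmap : Finset.univ.map φ = Finset.univ \ {0} := by
    ext x
    simp only [Finset.mem_map, Finset.mem_univ, Function.Embedding.coeFn_mk, true_and,
      Finset.mem_sdiff, Finset.mem_singleton, φ]
    exact isUnit_iff_ne_zero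
  have hcard : Fintype.card (ZMod p) = p := ZMod.card p
  calc ∑ x : ZMod p, x ^ k
      = ∑ x ∈ Finset.univ \ {0}, x ^ k := by
        refine (Finset.sum_subset Finset.sdiff_subset ?_).symm
        intro x _ hx
        have : x = 0 := by
          by_contra h
          exact hx (Finset.mem_sdiff.mpr ⟨Finset.mem_univ _, fun hm => h (Finset.mem_singleton.mp hm)⟩)
        rw [this, zero_pow hk0]
    _ = ∑ x ∈ Finset.univ.map φ, x ^ k := by rw [hmap]
    _ = ∑ x : (ZMod p)ˣ, ((x : ZMod p)) ^ k := by
        rw [Finset.sum_map]; rfl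
    _ = 0 := by
        rw [FiniteField.sum_pow_units]
        rw [hcard]
        simp [hk]

end powerSum

section bernoulliBounds
variable {p : ℕ} [hp : Fact p.Prime]

lemma claimA {k i : ℕ} (hi : i ≤ k) (b x : ℚ) :
    b * ((k + 1).choose i : ℚ) * x / ((k : ℚ) + 1) =
      b * (k.choose i : ℚ) * x / ((k + 1 - i : ℕ) : ℚ) := by
  have hq : ((k + 1 - i : ℕ) : ℚ) * ((k + 1).choose i : ℚ) =
      ((k : ℚ) + 1) * (k.choose i : ℚ) := by exact_mod_cast nat_choose_id hi
  have h1 : ((k : ℚ) + 1) ≠ 0 := by positivity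
  have h2 : ((k + 1 - i : ℕ) : ℚ) ≠ 0 := by
    have h3 : (0:ℚ) < ((k + 1 - i : ℕ) : ℚ) := by exact_mod_cast Nat.pos_of_ne_zero (by omega)
    exact h3.ne'
  field_simp
  linear_combination b * x * hq

lemma key_eq (k : ℕ) :
    (p : ℚ) * bernoulli k = (∑ x ∈ Finset.range p, (x : ℚ) ^ k) -
      ∑ i ∈ Finset.range k,
        bernoulli i * (k.choose i : ℚ) * (p : ℚ) ^ (k + 1 - i) / ((k + 1 - i : ℕ) : ℚ) := by
  have hS := sum_range_pow p k
  have hS2 : (∑ x ∈ Finset.range p, (x : ℚ) ^ k) =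
      ∑ i ∈ Finset.range (k + 1),
        bernoulli i * (k.choose i : ℚ) * (p : ℚ) ^ (k + 1 - i) / ((k + 1 - i : ℕ) : ℚ) := by
    rw [hS]
    refine Finset.sum_congr rfl fun i hi => ?_
    have hik : i ≤ k := by simpa [Nat.lt_succ_iff] using Finset.mem_range.mp hi
    have := claimA hik (bernoulli i) ((p : ℚ) ^ (k + 1 - i))
    push_cast at this ⊢
    convert this using 2
  rw [hS2, Finset.sum_range_succ]
  have : bernoulli k * (k.choose k : ℚ) * (p : ℚ) ^ (k + 1 - k) / ((k + 1 - k : ℕ) : ℚ) =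
      (p : ℚ) * bernoulli k := by
    have h1 : k + 1 - k = 1 := by omega
    rw [h1, Nat.choose_self]
    push_cast
    ring
  rw [this]
  ring

lemma tail_bound (hp5 : 5 ≤ p) {k : ℕ} (hk0 : k ≠ 0)
    (IH : ∀ i, i < k → padicNorm p (bernoulli i) ≤ p) :
    padicNorm p (∑ i ∈ Finset.range k,
        bernoulli i * (k.choose i : ℚ) * (p : ℚ) ^ (k + 1 - i) / ((k + 1 - i : ℕ) : ℚ)) ≤
      (p : ℚ) ^ (-1 : ℤ) := by
  apply padicNorm.sum_le ⟨0, Finset.mem_range.mpr (by omega)⟩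
  intro i hi
  have hik : i < k := Finset.mem_range.mp hi
  set j := k + 1 - i with hj
  have hj2 : 2 ≤ j := by omega
  apply norm_term_le (b1 := 1) (b2 := j - 2)
  · simpa using IH i hik
  · exact padicNorm.of_nat _
  · omega
  · have := val_add_two_le (p := p) hp5 hj2
    omega
  · have : ((j - 2 : ℕ) : ℤ) = (j : ℤ) - 2 := by omega
    rw [this]; omega

lemma bern_le (hp5 : 5 ≤ p) : ∀ k, padicNorm p (bernoulli k) ≤ p := by
  intro k
  induction k using Nat.strong_induction_on with
  | _ k IH =>
    rcases Nat.eq_zero_or_pos k with rfl | hk0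
    · rw [bernoulli_zero, padicNorm.one]
      exact_mod_cast hp.out.one_lt.le.trans (by omega)
    have hkey := key_eq (p := p) k
    have hS1 : padicNorm p (∑ x ∈ Finset.range p, (x : ℚ) ^ k) ≤ 1 := by
      have hcast : (∑ x ∈ Finset.range p, (x : ℚ) ^ k) =
          ((∑ x ∈ Finset.range p, x ^ k : ℕ) : ℚ) := by push_cast; rfl
      rw [hcast]; exact padicNorm.of_nat _
    have hT := tail_bound hp5 (by omega : k ≠ 0) (fun i h => IH i h)
    have hp1 : (1 : ℚ) < p := by exact_mod_cast hp.out.one_lt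
    have hple : (p : ℚ) ^ (-1 : ℤ) ≤ 1 := by
      rw [zpow_neg, zpow_one]
      rw [inv_le_one_iff₀]
      right; exact hp1.le
    have hmul : padicNorm p ((p : ℚ) * bernoulli k) ≤ 1 := by
      rw [hkey, sub_eq_add_neg]
      refine le_trans padicNorm.nonarchimedean (max_le hS1 ?_)
      rw [padicNorm.neg]
      exact hT.trans hple
    rw [padicNorm.mul, padicNorm.padicNorm_p_of_prime] at hmul
    have hppos : (0 : ℚ) < p := by positivity
    calc padicNorm p (bernoulli k) = (p : ℚ) * ((p : ℚ)⁻¹ * padicNorm p (bernoulli k)) := by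
          field_simp
      _ ≤ (p : ℚ) * 1 := by gcongr
      _ = p := mul_one _

lemma bern_one_le (hp5 : 5 ≤ p) {k : ℕ} (hk0 : k ≠ 0) (hknd : ¬ (p - 1) ∣ k) :
    padicNorm p (bernoulli k) ≤ 1 := by
  have hkey := key_eq (p := p) k
  have hS1 : padicNorm p (∑ x ∈ Finset.range p, (x : ℚ) ^ k) ≤ (p : ℚ) ^ (-1 : ℤ) := by
    obtain ⟨t, ht⟩ := powerSum_dvd (p := p) hk0 hknd
    have hcast : (∑ x ∈ Finset.range p, (x : ℚ) ^ k) = (p : ℚ) * (t : ℚ) := by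
      have h1 : (∑ x ∈ Finset.range p, (x : ℚ) ^ k) =
          ((∑ x ∈ Finset.range p, x ^ k : ℕ) : ℚ) := by push_cast; rfl
      rw [h1, ht]; push_cast; ring
    rw [hcast, padicNorm.mul, padicNorm.padicNorm_p_of_prime, zpow_neg, zpow_one]
    calc (p : ℚ)⁻¹ * padicNorm p (t : ℚ) ≤ (p : ℚ)⁻¹ * 1 := by
          gcongr <;> first
            | positivity
            | exact padicNorm.of_nat _
      _ = (p : ℚ)⁻¹ := mul_one _
  have hT := tail_bound hp5 hk0 (fun i _ => bern_le hp5 i)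
  have hmul : padicNorm p ((p : ℚ) * bernoulli k) ≤ (p : ℚ) ^ (-1 : ℤ) := by
    rw [hkey, sub_eq_add_neg]
    refine le_trans padicNorm.nonarchimedean (max_le hS1 ?_)
    rw [padicNorm.neg]
    exact hT
  rw [padicNorm.mul, padicNorm.padicNorm_p_of_prime, zpow_neg, zpow_one] at hmul
  have hppos : (0 : ℚ) < p := by positivity
  calc padicNorm p (bernoulli k) = (p : ℚ) * ((p : ℚ)⁻¹ * padicNorm p (bernoulli k)) := by
        field_simp
    _ ≤ (p : ℚ) * (p : ℚ)⁻¹ := by gcongr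
    _ = 1 := mul_inv_cancel₀ (ne_of_gt hppos)

end bernoulliBounds

theorem stmt_9 (p l n : ℕ) (hp : p.Prime) (hodd : Odd p)
    (hl2 : 2 ≤ l) (hlp : l ≤ p - 3) (hle : Even l)
    (hirr : (p : ℤ) ∣ (bernoulli l).num)
    (hn : 0 < n) (hcong : n ≡ l [MOD p - 1]) :
    ((p : ℤ)^2) ∣
      (bernoulli n / n - (∑ ν ∈ Finset.range p, (ν : ℚ)^n) / (n * p)).num := by
  haveI : Fact p.Prime := ⟨hp⟩
  have hp5 : 5 ≤ p := by
    have := hp.two_le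
    omega
  -- l ≠ 2
  have hlne2 : l ≠ 2 := by
    rintro rfl
    have hb2 : bernoulli 2 = 1/6 := by
      rw [bernoulli_eq_bernoulli'_of_ne_one (by norm_num), bernoulli'_two]
    rw [hb2] at hirr
    have : ((1 : ℚ)/6).num = 1 := by norm_num
    rw [this] at hirr
    have := Int.le_of_dvd one_pos hirr
    omega
  have hl4 : 4 ≤ l := by
    have := Nat.even_iff.mp hle
    omega
  -- n is even
  have hpm1 : 2 ∣ p - 1 := by
    have := Nat.odd_iff.mp hodd
    omega
  have hneven : n % 2 = 0 := by
    have h2 : n ≡ l [MOD 2] := Nat.ModEq.of_dvd hpm1 hcong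
    have := Nat.even_iff.mp hle
    unfold Nat.ModEq at h2
    omega
  have hlltp : l < p - 1 := by omega
  have hn2 : n ≠ 2 := by
    rintro rfl
    have h2 : 2 % (p - 1) = l % (p - 1) := hcong
    rw [Nat.mod_eq_of_lt (by omega), Nat.mod_eq_of_lt (by omega)] at h2
    omega
  have hn4 : 4 ≤ n := by omega
  have hnd2 : ¬ (p - 1) ∣ (n - 2) := by
    intro hd
    have h2n : 2 ≡ n [MOD p - 1] := (Nat.modEq_iff_dvd' (by omega)).mpr hd
    have h2l : 2 ≡ l [MOD p - 1] := h2n.trans hcong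
    have h2 : 2 % (p - 1) = l % (p - 1) := h2l
    rw [Nat.mod_eq_of_lt (by omega), Nat.mod_eq_of_lt (by omega)] at h2
    omega
  have hP0 : (p : ℚ) ≠ 0 := Nat.cast_ne_zero.mpr hp.ne_zero
  have hn0 : (n : ℚ) ≠ 0 := Nat.cast_ne_zero.mpr (by omega)
  -- the key algebraic identity
  have hkey : bernoulli n / n - (∑ ν ∈ Finset.range p, (ν : ℚ)^n) / (n * p) =
      -∑ i ∈ Finset.range n,
        bernoulli i * ((n-1).choose i : ℚ) * (p : ℚ) ^ (n - i) /
          (((n - i) * (n - i + 1) : ℕ) : ℚ) := by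
    rw [sum_range_pow p n, Finset.sum_range_succ]
    have hfn : bernoulli n * (((n+1).choose n : ℕ) : ℚ) * (p : ℚ) ^ (n + 1 - n) / ((n : ℚ) + 1) =
        bernoulli n * p := by
      rw [Nat.choose_succ_self_right]
      have h1 : n + 1 - n = 1 := by omega
      rw [h1]
      push_cast
      field_simp
    rw [hfn, add_div, Finset.sum_div]
    have hfnd : bernoulli n * (p : ℚ) / ((n : ℚ) * (p : ℚ)) = bernoulli n / n := by
      field_simp
    rw [hfnd]
    have hpt : ∀ i ∈ Finset.range n,
        bernoulli i * (((n+1).choose i : ℕ) : ℚ) * (p : ℚ) ^ (n + 1 - i) / ((n : ℚ) + 1) /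
          ((n : ℚ) * (p : ℚ)) =
        bernoulli i * ((n-1).choose i : ℚ) * (p : ℚ) ^ (n - i) /
          (((n - i) * (n - i + 1) : ℕ) : ℚ) := by
      intro i hi
      have hin : i < n := Finset.mem_range.mp hi
      have id1 : (n + 1 - i) * (n + 1).choose i = (n + 1) * n.choose i := nat_choose_id (by omega)
      have id2 : (n - i) * n.choose i = n * (n - 1).choose i := by
        have h := nat_choose_id (k := n - 1) (i := i) (by omega)
        have h1 : n - 1 + 1 = n := by omega
        rw [h1] at h
        have h2 : n - i = n + 1 - 1 - i := by omega
        convert h using 2 <;> omega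
      have hq1 : ((n + 1 - i : ℕ) : ℚ) * (((n+1).choose i : ℕ) : ℚ) =
          ((n : ℚ) + 1) * ((n.choose i : ℕ) : ℚ) := by exact_mod_cast id1
      have hq2 : ((n - i : ℕ) : ℚ) * ((n.choose i : ℕ) : ℚ) =
          (n : ℚ) * (((n-1).choose i : ℕ) : ℚ) := by exact_mod_cast id2
      have hexp : n + 1 - i = (n - i) + 1 := by omega
      have hexp2 : ((n + 1 - i : ℕ) : ℚ) = ((n - i : ℕ) : ℚ) + 1 := by
        rw [hexp]; push_cast; ring
      rw [hexp, pow_succ]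
      have hden : (((n - i) * (n - i + 1) : ℕ) : ℚ) =
          ((n - i : ℕ) : ℚ) * (((n - i : ℕ) : ℚ) + 1) := by push_cast; ring
      rw [hden]
      have hj0 : ((n - i : ℕ) : ℚ) ≠ 0 := by
        have : (0:ℚ) < ((n - i : ℕ) : ℚ) := by exact_mod_cast Nat.pos_of_ne_zero (by omega)
        exact this.ne'
      have hj1 : ((n - i : ℕ) : ℚ) + 1 ≠ 0 := by positivity
      have hn1 : ((n : ℚ) + 1) ≠ 0 := by positivity
      have hq1' : (((n - i : ℕ) : ℚ) + 1) * (((n+1).choose i : ℕ) : ℚ) =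
          ((n : ℚ) + 1) * ((n.choose i : ℕ) : ℚ) := by rw [← hexp2]; exact hq1
      field_simp
      linear_combination bernoulli i * ((n - i : ℕ) : ℚ) * hq1' +
        bernoulli i * ((n : ℚ) + 1) * hq2
    rw [Finset.sum_congr rfl hpt]
    ring
  apply num_dvd_of_norm_le
  rw [hkey, padicNorm.neg]
  apply padicNorm.sum_le ⟨0, Finset.mem_range.mpr (by omega)⟩
  intro i hi
  have hin : i < n := Finset.mem_range.mp hi
  rcases eq_or_ne i (n - 1) with rfl | hne1
  · have hodd' : Odd (n - 1) := Nat.Even.sub_odd (by omega) (Nat.even_iff.mpr hneven) odd_one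
    have hb : bernoulli (n - 1) = 0 := by
      rw [bernoulli_eq_bernoulli'_of_ne_one (by omega)]
      exact bernoulli'_eq_zero_of_odd hodd' (by omega)
    rw [hb]
    simp only [zero_mul, zero_div]
    rw [padicNorm.zero]
    positivity
  rcases eq_or_ne i (n - 2) with rfl | hne2
  · have hj : n - (n - 2) = 2 := by omega
    rw [hj]
    have h6 : ¬ p ∣ 6 := by
      intro h
      have h1 := Nat.le_of_dvd (by norm_num) h
      interval_cases p
      · revert h; norm_num
      · exact absurd hp (by norm_num)
    apply norm_term_le (b1 := 0) (b2 := 0) (t := -2)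
    · simpa using bern_one_le hp5 (by omega) hnd2
    · exact padicNorm.of_nat _
    · norm_num
    · have h62 : (2 * (2 + 1) : ℕ) = 6 := rfl
      rw [h62, padicValNat.eq_zero_of_not_dvd h6]
    · norm_num
  · have hj3 : 3 ≤ n - i := by omega
    apply norm_term_le (b1 := 1) (b2 := n - i - 3) (t := -2)
    · simpa using bern_le hp5 i
    · exact padicNorm.of_nat _
    · have : 0 < (n - i) * (n - i + 1) := by positivity
      omega
    · have := val_consec_le (p := p) hp5 hj3
      omega
    · have hc : ((n - i - 3 : ℕ) : ℤ) = ((n - i : ℕ) : ℤ) - 3 := by omega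
      rw [hc]
      omega
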